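/- For topological spaces X, consider the map λ_X sending a continuous valuation ξ on the Smyth hyperspace S_V(X) to the set {ν continuous valuation on X | ν(U) ≥ ξ(□U) for every open U ⊆ X}. Then for every ν, the condition 'ν(U) ≥ ξ(□U) for all open U' is equivalent to '∫_X h dν ≥ ∫_{Q ∈ S_V X} min_{x∈Q} h(x) dξ for all lower semicontinuous h : X → [0,∞]'. -/

import Mathlib

open Set ENNReal TopologicalSpace MeasureTheory

/-- The specialization preorder: `x ≤ y` iff every open set containing `x`
contains `y`. -/
def SpecLE {X : Type*} [TopologicalSpace X] (x y : X) : Prop :=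
  ∀ U : Set X, IsOpen U → x ∈ U → y ∈ U

/-- A set is saturated iff it is upwards closed in the specialization
preorder (equivalently, an intersection of open sets). -/
def IsSaturated {X : Type*} [TopologicalSpace X] (Q : Set X) : Prop :=
  ∀ ⦃x y : X⦄, SpecLE x y → x ∈ Q → y ∈ Q

/-- The Smyth hyperspace: nonempty compact saturated subsets of `X`. -/
def Smyth (X : Type*) [TopologicalSpace X] :=
  {Q : Set X // IsCompact Q ∧ IsSaturated Q ∧ Q.Nonempty}

/-- The upper Vietoris topology on the Smyth hyperspace, generated by the
basic open sets `□U = {Q | Q ⊆ U}`, `U` open. -/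
instance Smyth.topology (X : Type*) [TopologicalSpace X] :
    TopologicalSpace (Smyth X) :=
  TopologicalSpace.generateFrom
    {s | ∃ U : Set X, IsOpen U ∧ s = {Q : Smyth X | Q.1 ⊆ U}}

/-- A continuous valuation: a strict, modular, Scott-continuous map from the
open sets to `[0, ∞]`. -/
def IsContinuousValuation {Y : Type*} [TopologicalSpace Y]
    (ν : Opens Y → ℝ≥0∞) : Prop :=
  ν ⊥ = 0 ∧
  (∀ U V : Opens Y, ν U + ν V = ν (U ⊔ V) + ν (U ⊓ V)) ∧
  (∀ D : Set (Opens Y), D.Nonempty → DirectedOn (· ≤ ·) D →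
    ν (sSup D) = ⨆ U ∈ D, ν U)

/-- The Choquet integral `∫ h dν = ∫₀^∞ ν (h⁻¹ (t, ∞]) dt` of a lower
semicontinuous map against a valuation. -/
noncomputable def choquet {Y : Type*} [TopologicalSpace Y] (ν : Opens Y → ℝ≥0∞)
    (h : Y → ℝ≥0∞) (hh : LowerSemicontinuous h) : ℝ≥0∞ :=
  ∫⁻ t in Set.Ioi (0 : ℝ),
    ν ⟨h ⁻¹' Set.Ioi (ENNReal.ofReal t),
       lowerSemicontinuous_iff_isOpen_preimage.mp hh _⟩

/-- The basic open set `□U` of the upper Vietoris topology, as an open set of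
the Smyth hyperspace. -/
def boxOpen {X : Type*} [TopologicalSpace X] (U : Opens X) : Opens (Smyth X) :=
  ⟨{Q : Smyth X | Q.1 ⊆ U.1},
   TopologicalSpace.GenerateOpen.basic _ ⟨U.1, U.2, rfl⟩⟩

/-- compact subset of a strict superlevel set has inf above the level -/
lemma aux_lt_iInf {X : Type*} [TopologicalSpace X] {h : X → ℝ≥0∞}
    (hh : LowerSemicontinuous h) {Q : Set X} (hQ : IsCompact Q) (hne : Q.Nonempty)
    {a : ℝ≥0∞} (hsub : Q ⊆ h ⁻¹' Ioi a) : a < ⨅ x ∈ Q, h x := by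
  have key : ∀ x : Q, ∃ b, a < b ∧ b < h x.1 := fun x => exists_between (hsub x.2)
  choose s hs1 hs2 using key
  obtain ⟨t, ht⟩ := hQ.elim_finite_subcover (fun x : Q => h ⁻¹' Ioi (s x))
    (fun x => hh.isOpen_preimage _) (fun x hx => mem_iUnion.2 ⟨⟨x, hx⟩, hs2 ⟨x, hx⟩⟩)
  obtain ⟨x0, hx0⟩ := hne
  have htne : t.Nonempty := by
    obtain ⟨i, hi, _⟩ := mem_iUnion₂.1 (ht hx0)
    exact ⟨i, hi⟩
  refine lt_of_lt_of_le (b := t.inf' htne s) ?_ ?_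
  · exact (Finset.lt_inf'_iff _).2 fun i _ => hs1 i
  · refine le_iInf₂ fun x hx => ?_
    obtain ⟨i, hi, hxi⟩ := mem_iUnion₂.1 (ht hx)
    exact le_trans (Finset.inf'_le s hi) (le_of_lt hxi)

lemma choquet_congr {Y : Type*} [TopologicalSpace Y] (ν : Opens Y → ℝ≥0∞)
    {h₁ h₂ : Y → ℝ≥0∞} (e : h₁ = h₂) (p₁ : LowerSemicontinuous h₁)
    (p₂ : LowerSemicontinuous h₂) : choquet ν h₁ p₁ = choquet ν h₂ p₂ := by
  subst e; rfl

lemma choquet_indicator {Y : Type*} [TopologicalSpace Y] (ν : Opens Y → ℝ≥0∞)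
    (h0 : ν ⊥ = 0) (W : Opens Y)
    (hls : LowerSemicontinuous (W.1.indicator fun _ => (1 : ℝ≥0∞))) :
    choquet ν (W.1.indicator fun _ => (1 : ℝ≥0∞)) hls = ν W := by
  unfold choquet
  have key : ∀ t ∈ Ioi (0:ℝ),
      ν ⟨(W.1.indicator fun _ => (1 : ℝ≥0∞)) ⁻¹' Ioi (ENNReal.ofReal t),
        lowerSemicontinuous_iff_isOpen_preimage.mp hls _⟩
      = (Iio (1:ℝ)).indicator (fun _ => ν W) t := by
    intro t ht
    by_cases h1 : t < 1
    · rw [Set.indicator_of_mem (show t ∈ Iio 1 from h1)]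
      congr 1
      apply Opens.ext
      ext x
      simp only [Opens.coe_mk, mem_preimage, mem_Ioi]
      by_cases hx : x ∈ W.1
      · rw [Set.indicator_of_mem hx]
        exact iff_of_true (ENNReal.ofReal_lt_one.2 h1) hx
      · rw [Set.indicator_of_notMem hx]
        exact iff_of_false (by simp) hx
    · rw [Set.indicator_of_notMem (show t ∉ Iio 1 from h1)]
      have : (⟨(W.1.indicator fun _ => (1 : ℝ≥0∞)) ⁻¹' Ioi (ENNReal.ofReal t),
          lowerSemicontinuous_iff_isOpen_preimage.mp hls _⟩ : Opens Y) = ⊥ := by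
        apply Opens.ext
        ext x
        simp only [Opens.coe_mk, mem_preimage, mem_Ioi, Opens.coe_bot, mem_empty_iff_false,
          iff_false, not_lt]
        by_cases hx : x ∈ W.1
        · rw [Set.indicator_of_mem hx]
          exact ENNReal.one_le_ofReal.2 (le_of_not_gt h1)
        · rw [Set.indicator_of_notMem hx]; exact zero_le
      rw [this, h0]
  rw [setLIntegral_congr_fun measurableSet_Ioi key,
    lintegral_indicator measurableSet_Iio _, setLIntegral_const,
    Measure.restrict_apply measurableSet_Iio]
  have : Iio (1:ℝ) ∩ Ioi 0 = Ioo 0 1 := by ext x; simp [and_comm]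
  rw [this, Real.volume_Ioo]
  simp

/-- For continuous valuations `ν` on `X` and `ξ` on the Smyth hyperspace of `X`,
the condition `ν U ≥ ξ (□U)` for all open `U` is equivalent to
`∫ h dν ≥ ∫ (Q ↦ min_{x ∈ Q} h x) dξ` for all lower semicontinuous
`h : X → [0, ∞]`. -/
theorem smyth_valuation_domination_iff {X : Type*} [TopologicalSpace X]
    (ν : Opens X → ℝ≥0∞) (ξ : Opens (Smyth X) → ℝ≥0∞)
    (hν : IsContinuousValuation ν) (hξ : IsContinuousValuation ξ)
    (hmin : ∀ (h : X → ℝ≥0∞), LowerSemicontinuous h →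
      LowerSemicontinuous fun Q : Smyth X => ⨅ x ∈ Q.1, h x) :
    (∀ U : Opens X, ξ (boxOpen U) ≤ ν U) ↔
      ∀ (h : X → ℝ≥0∞) (hh : LowerSemicontinuous h),
        choquet ξ (fun Q : Smyth X => ⨅ x ∈ Q.1, h x) (hmin h hh) ≤ choquet ν h hh := by
  constructor
  · intro hdom h hh
    refine lintegral_mono fun t => ?_
    have hbox : (⟨(fun Q : Smyth X => ⨅ x ∈ Q.1, h x) ⁻¹' Ioi (ENNReal.ofReal t),
        lowerSemicontinuous_iff_isOpen_preimage.mp (hmin h hh) _⟩ : Opens (Smyth X))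
        = boxOpen ⟨h ⁻¹' Ioi (ENNReal.ofReal t),
          lowerSemicontinuous_iff_isOpen_preimage.mp hh _⟩ := by
      apply Opens.ext
      ext Q
      simp only [Opens.coe_mk, mem_preimage, mem_Ioi, boxOpen, mem_setOf_eq]
      constructor
      · intro hlt x hx
        exact lt_of_lt_of_le hlt (iInf₂_le x hx)
      · intro hsub
        exact aux_lt_iInf hh Q.2.1 Q.2.2.2 hsub
    rw [hbox]
    exact hdom _
  · intro hint U
    have hhU : LowerSemicontinuous (U.1.indicator fun _ => (1 : ℝ≥0∞)) :=
      U.2.lowerSemicontinuous_indicator zero_le_one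
    have hbls : LowerSemicontinuous ((boxOpen U).1.indicator fun _ => (1 : ℝ≥0∞)) :=
      (boxOpen U).2.lowerSemicontinuous_indicator zero_le_one
    have hfun : (fun Q : Smyth X => ⨅ x ∈ Q.1, (U.1.indicator fun _ => (1 : ℝ≥0∞)) x)
        = (boxOpen U).1.indicator fun _ => (1 : ℝ≥0∞) := by
      funext Q
      by_cases hQ : Q.1 ⊆ U.1
      · rw [Set.indicator_of_mem (a := Q) hQ]
        refine le_antisymm ?_ (le_iInf₂ fun x hx => by
          rw [Set.indicator_of_mem (hQ hx)])
        obtain ⟨x0, hx0⟩ := Q.2.2.2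
        exact le_trans (iInf₂_le x0 hx0) (by rw [Set.indicator_of_mem (hQ hx0)])
      · rw [Set.indicator_of_notMem (a := Q) hQ]
        obtain ⟨x, hxQ, hxU⟩ := not_subset.1 hQ
        refine le_antisymm ?_ zero_le
        exact le_trans (iInf₂_le x hxQ) (by rw [Set.indicator_of_notMem hxU])
    have := hint (U.1.indicator fun _ => (1 : ℝ≥0∞)) hhU
    rwa [choquet_congr ξ hfun _ hbls, choquet_indicator ξ hξ.1 (boxOpen U) hbls,
      choquet_indicator ν hν.1 U hhU] at this
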